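/- Let G be a group such that every infinite virtually cyclic subgroup of G is of type I and such that the Klein bottle group ℤ ⋊ ℤ (the semidirect product of ℤ with ℤ where the generator acts by −1) is not isomorphic to any subgroup of G. Then for every infinite cyclic subgroup C of G and every element g of the normalizer N_G(C), conjugation by g induces the identity automorphism on C. -/

import Mathlib

/-- A group is virtually cyclic if it contains a cyclic subgroup of finite index. -/
def VirtuallyCyclic (G : Type*) [Group G] : Prop :=
  ∃ H : Subgroup G, IsCyclic ↥H ∧ H.FiniteIndex

/-- An infinite virtually cyclic group is of type I if it admits a surjective
homomorphism onto the infinite cyclic group ℤ. -/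
def IsTypeI (G : Type*) [Group G] : Prop :=
  ∃ f : G →* Multiplicative ℤ, Function.Surjective f

/-- An infinite virtually cyclic group is of type II if it admits a surjective
homomorphism onto the infinite dihedral group D∞. -/
def IsTypeII (G : Type*) [Group G] : Prop :=
  ∃ f : G →* DihedralGroup 0, Function.Surjective f

/-- The fundamental group of the Klein bottle: the semidirect product `ℤ ⋊ ℤ`, where the
generator of the second factor acts on the first by inversion. -/
abbrev KleinBottleGroup : Type :=
  Multiplicative ℤ ⋊[zpowersHom (MulAut (Multiplicative ℤ)) (MulEquiv.inv (Multiplicative ℤ))]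
    Multiplicative ℤ

/-- If all infinite virtually cyclic subgroups of `G` are of type I and the Klein bottle
group is not isomorphic to a subgroup of `G`, then for every infinite cyclic subgroup
`C ≤ G`, conjugation by any element of the normalizer of `C` induces the identity on `C`. -/

lemma conj_pow_parity {G : Type*} [Group G] (x g : G) (hc : g * x * g⁻¹ = x⁻¹) :
    ∀ b : ℤ, g ^ b * x * g ^ (-b) = if Even b then x else x⁻¹ := by
  have hcinv : g * x⁻¹ * g⁻¹ = x := by
    have := congrArg (·⁻¹) hc
    simpa [mul_inv_rev, mul_assoc] using this
  have h0 : g⁻¹ * x⁻¹ * g = x := by rw [← hc]; group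
  have hc' : g⁻¹ * x * g = x⁻¹ := by
    have := congrArg (·⁻¹) h0
    simpa [mul_inv_rev, mul_assoc] using this
  intro b
  induction b using Int.induction_on with
  | zero => simp
  | succ n ih =>
      have h1 : g ^ ((n:ℤ)+1) * x * g ^ (-((n:ℤ)+1)) = g * (g ^ (n:ℤ) * x * g ^ (-(n:ℤ))) * g⁻¹ := by
        group
      rw [h1, ih]
      by_cases h : Even (n:ℤ)
      · rw [if_pos h, if_neg (by simpa [Int.even_add_one] using h), hc]
      · rw [if_neg h, if_pos (by simpa [Int.even_add_one] using h), hcinv]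
  | pred n ih =>
      have h1 : g ^ (-(n:ℤ)-1) * x * g ^ (-(-(n:ℤ)-1)) = g⁻¹ * (g ^ (-(n:ℤ)) * x * g ^ (-(-(n:ℤ)))) * g := by
        group
      have hpar : Even (-(n:ℤ)-1) ↔ ¬ Even (-(n:ℤ)) := by
        constructor <;> intro hh
        · intro h2; rcases hh with ⟨a, ha⟩; rcases h2 with ⟨b, hb⟩; omega
        · rcases Int.even_or_odd (-(n:ℤ)-1) with h3 | h3
          · exact h3
          · exfalso; apply hh; rcases h3 with ⟨k, hk⟩; exact ⟨k+1, by omega⟩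
      rw [h1, ih]
      by_cases h : Even (-(n:ℤ))
      · rw [if_pos h, if_neg (by simp [hpar, h]), hc']
      · rw [if_neg h, if_pos (hpar.mpr h), h0]

lemma invpow_eq : ∀ b : ℤ, (MulEquiv.inv (Multiplicative ℤ)) ^ b =
    if Even b then 1 else (MulEquiv.inv (Multiplicative ℤ)) := by
  have e2 : (MulEquiv.inv (Multiplicative ℤ)) ^ (2:ℤ) = 1 := by
    ext a
    simp [zpow_ofNat, pow_two]
  intro b
  rcases Int.even_or_odd b with ⟨k, hk⟩ | ⟨k, hk⟩
  · rw [if_pos ⟨k, hk⟩, hk, show k + k = 2 * k by ring, zpow_mul, e2, one_zpow]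
  · rw [if_neg (by rintro ⟨a, ha⟩; omega),
      hk, zpow_add, zpow_mul, e2, one_zpow, one_mul, zpow_one]

lemma klein_case {G : Type*} [Group G] (x g : G) (hc : g * x * g⁻¹ = x⁻¹)
    (hker : ∀ i j : ℤ, x ^ i * g ^ j = 1 → i = 0 ∧ j = 0) :
    ∃ f : KleinBottleGroup →* G, Function.Injective f := by
  have hcompat : ∀ b : Multiplicative ℤ,
      (zpowersHom G x).comp (((zpowersHom (MulAut (Multiplicative ℤ))
          (MulEquiv.inv (Multiplicative ℤ))) b).toMonoidHom) =
        (MulAut.conj ((zpowersHom G g) b)).toMonoidHom.comp (zpowersHom G x) := by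
    intro b
    apply MonoidHom.ext_mint
    have hb := conj_pow_parity x g hc b.toAdd
    simp only [MonoidHom.comp_apply, MulEquiv.coe_toMonoidHom, zpowersHom_apply,
      MulAut.conj_apply, invpow_eq b.toAdd]
    by_cases h : Even b.toAdd
    · rw [if_pos h] at hb ⊢
      simpa [zpow_neg] using hb.symm
    · rw [if_neg h] at hb ⊢
      have : x ^ ((Multiplicative.ofAdd (1:ℤ))⁻¹).toAdd = x⁻¹ := by simp
      rw [show (MulEquiv.inv (Multiplicative ℤ)) (Multiplicative.ofAdd 1)
            = (Multiplicative.ofAdd (1:ℤ))⁻¹ from rfl, this]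
      simpa [zpow_neg] using hb.symm
  refine ⟨SemidirectProduct.lift (zpowersHom G x) (zpowersHom G g) hcompat, ?_⟩
  rw [injective_iff_map_eq_one]
  intro k hk
  have hk' : x ^ k.left.toAdd * g ^ k.right.toAdd = 1 := by
    simpa [SemidirectProduct.lift] using hk
  obtain ⟨h1, h2⟩ := hker _ _ hk'
  ext
  · exact h1
  · exact h2

-- swap lemma
lemma swap_lemma {G : Type*} [Group G] (x g : G) (hc : g * x * g⁻¹ = x⁻¹) (b a : ℤ) :
    ∃ a' : ℤ, g ^ b * x ^ a = x ^ a' * g ^ b := by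
  have h := conj_pow_parity x g hc b
  have h2 : g ^ b * x ^ a * g ^ (-b) = (g ^ b * x * g ^ (-b)) ^ a := by
    rw [zpow_neg]; exact (conj_zpow ..).symm
  rw [h] at h2
  by_cases hb : Even b
  · rw [if_pos hb] at h2
    exact ⟨a, by calc g ^ b * x ^ a = (g ^ b * x ^ a * g ^ (-b)) * g ^ b := by group
      _ = x ^ a * g ^ b := by rw [h2]⟩
  · rw [if_neg hb] at h2
    refine ⟨-a, ?_⟩
    calc g ^ b * x ^ a = (g ^ b * x ^ a * g ^ (-b)) * g ^ b := by group
      _ = x ^ (-a) * g ^ b := by rw [h2, inv_zpow, zpow_neg]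

lemma isCyclic_zpowers {G : Type*} [Group G] (a : G) : IsCyclic ↥(Subgroup.zpowers a) := by
  refine ⟨⟨⟨a, Subgroup.mem_zpowers a⟩, fun y => ?_⟩⟩
  obtain ⟨n, hn⟩ := y.2
  exact ⟨n, Subtype.ext (by simpa using hn)⟩

lemma type1_case {G : Type*} [Group G]
    (h1 : ∀ V : Subgroup G, Infinite ↥V → (∃ H : Subgroup ↥V, IsCyclic ↥H ∧ H.FiniteIndex) →
      ∃ f : ↥V →* Multiplicative ℤ, Function.Surjective f)
    (x g : G) (hx : ¬ IsOfFinOrder x) (hc : g * x * g⁻¹ = x⁻¹)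
    (i j : ℤ) (hj : j ≠ 0) (hrel : x ^ i * g ^ j = 1) : False := by
  -- the subgroup S = { x^a * g^b }
  have hswap := swap_lemma x g hc
  let S : Subgroup G :=
    { carrier := {y | ∃ a b : ℤ, y = x ^ a * g ^ b}
      one_mem' := ⟨0, 0, by simp⟩
      mul_mem' := by
        rintro y z ⟨a1, b1, rfl⟩ ⟨a2, b2, rfl⟩
        obtain ⟨a', ha'⟩ := hswap b1 a2
        refine ⟨a1 + a', b1 + b2, ?_⟩
        rw [zpow_add, zpow_add]
        calc x ^ a1 * g ^ b1 * (x ^ a2 * g ^ b2)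
            = x ^ a1 * (g ^ b1 * x ^ a2) * g ^ b2 := by group
          _ = x ^ a1 * (x ^ a' * g ^ b1) * g ^ b2 := by rw [ha']
          _ = x ^ a1 * x ^ a' * (g ^ b1 * g ^ b2) := by group
      inv_mem' := by
        rintro y ⟨a, b, rfl⟩
        obtain ⟨a', ha'⟩ := hswap (-b) (-a)
        refine ⟨a', -b, ?_⟩
        calc (x ^ a * g ^ b)⁻¹ = g ^ (-b) * x ^ (-a) := by
              rw [mul_inv_rev, zpow_neg, zpow_neg]
          _ = x ^ a' * g ^ (-b) := ha' }
  have hxS : x ∈ S := ⟨1, 0, by simp⟩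
  have hgS : g ∈ S := ⟨0, 1, by simp⟩
  have hzinj : Function.Injective fun n : ℤ => x ^ n :=
    injective_zpow_iff_not_isOfFinOrder.mpr hx
  have hSinf : Infinite ↥S := by
    refine Infinite.of_injective (fun n : ℤ => (⟨x ^ n, n, 0, by simp⟩ : ↥S)) ?_
    intro a b hab
    exact hzinj (congrArg Subtype.val hab)
  -- g ^ (n : ℤ) = x ^ m with n = j.natAbs > 0
  set n : ℕ := j.natAbs with hn
  have hn0 : 0 < n := Int.natAbs_pos.mpr hj
  have hgj : g ^ j = x ^ (-i) := by
    rw [zpow_neg]; exact eq_inv_of_mul_eq_one_right hrel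
  obtain ⟨m, hm⟩ : ∃ m : ℤ, g ^ (n : ℤ) = x ^ m := by
    rcases Int.natAbs_eq j with h | h
    · exact ⟨-i, by rw [← hgj, ← h]⟩
    · refine ⟨i, ?_⟩
      have : g ^ (-(n:ℤ)) = x ^ (-i) := by rw [← hgj, ← h]
      calc g ^ (n:ℤ) = (g ^ (-(n:ℤ)))⁻¹ := by rw [zpow_neg, inv_inv]
        _ = (x ^ (-i))⁻¹ := by rw [this]
        _ = x ^ i := by rw [zpow_neg, inv_inv]
  -- the cyclic finite-index subgroup
  let X : ↥S := ⟨x, hxS⟩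
  let Gg : ↥S := ⟨g, hgS⟩
  let H : Subgroup ↥S := Subgroup.zpowers X
  have hXzpow : ∀ k : ℤ, ((X ^ k : ↥S) : G) = x ^ k := fun k => by
    simp [X]
  have hGgzpow : ∀ k : ℤ, ((Gg ^ k : ↥S) : G) = g ^ k := fun k => by
    simp [Gg]
  have hfin : Finite (↥S ⧸ H) := by
    refine Finite.of_surjective
      (fun r : Fin n => QuotientGroup.mk (⟨g ^ (r : ℤ), 0, r, by simp⟩ : ↥S)) ?_
    intro q
    induction q using QuotientGroup.induction_on with
    | H s =>
      obtain ⟨a, b, hs⟩ := s.2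
      have h0 : 0 ≤ b % (n:ℤ) := Int.emod_nonneg b (by exact_mod_cast hn0.ne')
      have h1' : b % (n:ℤ) < n := Int.emod_lt_of_pos b (by exact_mod_cast hn0)
      have hrlt : (b % (n:ℤ)).toNat < n := by omega
      refine ⟨⟨(b % (n:ℤ)).toNat, hrlt⟩, ?_⟩
      rw [QuotientGroup.eq]
      set r : ℤ := b % (n:ℤ) with hrdef
      have hrcast : ((⟨r.toNat, hrlt⟩ : Fin n) : ℤ) = r := by
        push_cast
        exact Int.toNat_of_nonneg h0
      set t : ℤ := b / (n:ℤ) with htdef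
      have hbt : b - r = (n:ℤ) * t := by
        have h := Int.mul_ediv_add_emod b (n:ℤ)
        rw [hrdef, htdef]; linarith [h]
      obtain ⟨a', ha'⟩ := hswap (-r) a
      refine Subgroup.mem_zpowers_iff.mpr ⟨a' + m * t, Subtype.ext ?_⟩
      rw [hXzpow]
      show x ^ (a' + m * t) = (g ^ (((⟨r.toNat, hrlt⟩ : Fin n) : ℤ)))⁻¹ * (s : G)
      rw [hrcast, hs]
      have hnt : (n:ℤ) * t = -r + b := by linarith [hbt]
      calc x ^ (a' + m * t)
          = x ^ a' * x ^ (m * t) := zpow_add x a' (m * t)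
        _ = x ^ a' * g ^ ((n:ℤ) * t) := by rw [zpow_mul x m t, ← hm, ← zpow_mul]
        _ = x ^ a' * (g ^ (-r) * g ^ b) := by rw [hnt, zpow_add]
        _ = (g ^ (-r) * x ^ a) * g ^ b := by rw [← mul_assoc, ← ha']
        _ = (g ^ r)⁻¹ * (x ^ a * g ^ b) := by rw [zpow_neg]; group
  haveI := hfin
  have hHfi : H.FiniteIndex := H.finiteIndex_of_finite_quotient
  obtain ⟨f, hf⟩ := h1 S hSinf ⟨H, isCyclic_zpowers X, hHfi⟩
  -- f X = 1
  have hrelS : Gg * X * Gg⁻¹ = X⁻¹ := Subtype.ext (by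
    push_cast [X, Gg]
    exact hc)
  have hfX : f X = 1 := by
    have h2 : f Gg * f X * (f Gg)⁻¹ = (f X)⁻¹ := by
      rw [← map_mul, ← map_inv, ← map_mul, hrelS, map_inv]
    have h3 : f X = (f X)⁻¹ := by
      rw [← h2]; rw [mul_comm (f Gg) (f X)]; group
    have h4 : (f X).toAdd = -(f X).toAdd := by
      have := congrArg Multiplicative.toAdd h3
      simpa using this
    have h5 : (f X).toAdd = 0 := by omega
    exact Multiplicative.toAdd.injective (by simpa using h5)
  have hfGg : f Gg = 1 := by
    have h2 : Gg ^ (n:ℤ) = X ^ m := Subtype.ext (by rw [hXzpow, hGgzpow, hm])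
    have h3 : (f Gg) ^ (n:ℤ) = 1 := by
      rw [← map_zpow, h2, map_zpow, hfX, one_zpow]
    have h4 : (n:ℤ) * (f Gg).toAdd = 0 := by
      have := congrArg Multiplicative.toAdd h3
      simpa [toAdd_zpow] using this
    have h5 : (f Gg).toAdd = 0 := by
      rcases mul_eq_zero.mp h4 with h | h
      · exfalso; omega
      · exact h
    exact Multiplicative.toAdd.injective (by simpa using h5)
  -- contradiction with surjectivity
  obtain ⟨s, hsval⟩ := hf (Multiplicative.ofAdd 1)
  obtain ⟨a, b, hs⟩ := s.2
  have hsX : s = X ^ a * Gg ^ b := Subtype.ext (by rw [Subgroup.coe_mul, hXzpow, hGgzpow]; exact hs)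
  have : f s = 1 := by
    rw [hsX, map_mul, map_zpow, map_zpow, hfX, hfGg, one_zpow, one_zpow, one_mul]
  rw [hsval] at this
  have h9 : (1:ℤ) = 0 := by simpa using congrArg Multiplicative.toAdd this
  omega

theorem conj_id_on_infinite_cyclic (G : Type*) [Group G]
    (h1 : ∀ V : Subgroup G, Infinite ↥V → VirtuallyCyclic ↥V → IsTypeI ↥V)
    (h2 : ¬ ∃ f : KleinBottleGroup →* G, Function.Injective f) :
    ∀ C : Subgroup G, IsCyclic ↥C → Infinite ↥C →
      ∀ g ∈ Subgroup.normalizer (C : Set G), ∀ c ∈ C, g * c * g⁻¹ = c := by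
  intro C hC hCinf g hgnorm c hcC
  obtain ⟨x₀, hx₀⟩ := hC.exists_generator
  set x : G := (x₀ : G) with hxdef
  have hxC : x ∈ C := x₀.2
  -- x has infinite order
  have hx : ¬ IsOfFinOrder x := by
    intro hfo
    have hfo' : IsOfFinOrder x₀ := by
      rwa [← Submonoid.isOfFinOrder_coe]
    have hfin : (Subgroup.zpowers x₀ : Set ↥C).Finite := hfo'.finite_zpowers
    have : (Set.univ : Set ↥C).Finite :=
      hfin.subset (fun y _ => hx₀ y)
    haveI : Finite ↥C := Set.finite_univ_iff.mp this
    exact not_finite ↥C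
  have hzinj : Function.Injective fun k : ℤ => x ^ k :=
    injective_zpow_iff_not_isOfFinOrder.mpr hx
  -- conjugation sends x to x^n
  have hmemconj : g * x * g⁻¹ ∈ C := (Subgroup.mem_normalizer_iff.mp hgnorm x).mp hxC
  obtain ⟨n, hn⟩ := hx₀ ⟨g * x * g⁻¹, hmemconj⟩
  have hn' : x ^ n = g * x * g⁻¹ := congrArg Subtype.val hn
  have hmemconj' : g⁻¹ * x * g ∈ C := by
    have := (Subgroup.mem_normalizer_iff.mp ((Subgroup.normalizer (C : Set G)).inv_mem hgnorm) x).mp hxC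
    simpa using this
  obtain ⟨s, hs⟩ := hx₀ ⟨g⁻¹ * x * g, hmemconj'⟩
  have hs' : x ^ s = g⁻¹ * x * g := congrArg Subtype.val hs
  -- n * s = 1
  have hns : x ^ (n * s) = x ^ (1:ℤ) := by
    rw [zpow_one, zpow_mul]
    calc (x ^ n) ^ s = (g * x * g⁻¹) ^ s := by rw [hn']
      _ = g * x ^ s * g⁻¹ := by rw [conj_zpow]
      _ = g * (g⁻¹ * x * g) * g⁻¹ := by rw [hs']
      _ = x := by group
  have hns1 : n * s = 1 := hzinj hns
  have hnpm : n = 1 ∨ n = -1 := Int.isUnit_iff.mp (IsUnit.of_mul_eq_one s hns1)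
  -- c = x ^ t
  obtain ⟨t, ht⟩ := hx₀ ⟨c, hcC⟩
  have ht' : x ^ t = c := congrArg Subtype.val ht
  rcases hnpm with h | h
  · -- conjugation is the identity
    rw [h, zpow_one] at hn'
    rw [← ht', ← conj_zpow, ← hn']
  · -- conjugation is inversion: derive a contradiction
    exfalso
    rw [h] at hn'
    have hcinv : g * x * g⁻¹ = x⁻¹ := by rw [← hn', zpow_neg_one]
    by_cases hker : ∀ i j : ℤ, x ^ i * g ^ j = 1 → i = 0 ∧ j = 0
    · exact h2 (klein_case x g hcinv hker)
    · push_neg at hker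
      obtain ⟨i, j, hij, hij0⟩ := hker
      have hj : j ≠ 0 := by
        intro hj0
        subst hj0
        have : x ^ i = 1 := by simpa using hij
        have hi0 : i = 0 := hzinj (by simpa using this)
        exact hij0 hi0 rfl
      exact type1_case h1 x g hx hcinv i j hj hij
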